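/- Let A and B be n×n Hermitian positive semidefinite complex matrices with eigenvalues α_1 ≥ … ≥ α_n and β_1 ≥ … ≥ β_n (in decreasing order), and let √A denote the positive semidefinite square root of A. Then det( I + √A · B · √A ) ≤ ∏_{i=1}^{n} ( 1 + α_i β_i ). -/

import Mathlib

open Matrix BigOperators ComplexOrder

/-- `Matrix.PosSemidef.sqrt` was removed from Mathlib; this restores its December 2024
definition verbatim (the PSD square root via the spectral theorem). -/
noncomputable def Matrix.PosSemidef.sqrt {n 𝕜 : Type*} [RCLike 𝕜] [Fintype n] [DecidableEq n]
    {A : Matrix n n 𝕜} (hA : A.PosSemidef) : Matrix n n 𝕜 :=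
  hA.1.eigenvectorUnitary.1 * diagonal ((↑) ∘ (√·) ∘ hA.1.eigenvalues) *
  (star hA.1.eigenvectorUnitary : Matrix n n 𝕜)

lemma Matrix.PosSemidef.posSemidef_sqrt {n 𝕜 : Type*} [RCLike 𝕜] [Fintype n] [DecidableEq n]
    {A : Matrix n n 𝕜} (hA : A.PosSemidef) : hA.sqrt.PosSemidef := by
  unfold Matrix.PosSemidef.sqrt
  have hd : (diagonal ((↑) ∘ (√·) ∘ hA.1.eigenvalues : n → 𝕜)).PosSemidef := by
    refine posSemidef_diagonal_iff.mpr fun i => ?_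
    simp only [Function.comp_apply]
    exact_mod_cast Real.sqrt_nonneg _
  exact hd.mul_mul_conjTranspose_same _

lemma Matrix.PosSemidef.sqrt_mul_self {n 𝕜 : Type*} [RCLike 𝕜] [Fintype n] [DecidableEq n]
    {A : Matrix n n 𝕜} (hA : A.PosSemidef) : hA.sqrt * hA.sqrt = A := by
  have hU : (star hA.1.eigenvectorUnitary : Matrix n n 𝕜) * hA.1.eigenvectorUnitary.1 = 1 :=
    Matrix.mem_unitaryGroup_iff'.mp hA.1.eigenvectorUnitary.2
  have hspec : A = hA.1.eigenvectorUnitary.1 * diagonal (RCLike.ofReal ∘ hA.1.eigenvalues) *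
      (star hA.1.eigenvectorUnitary : Matrix n n 𝕜) := hA.1.spectral_theorem
  unfold Matrix.PosSemidef.sqrt
  calc _ = hA.1.eigenvectorUnitary.1 * (diagonal ((↑) ∘ (√·) ∘ hA.1.eigenvalues) *
      ((star hA.1.eigenvectorUnitary : Matrix n n 𝕜) * hA.1.eigenvectorUnitary.1) *
      diagonal ((↑) ∘ (√·) ∘ hA.1.eigenvalues)) * (star hA.1.eigenvectorUnitary : Matrix n n 𝕜) := by
        simp only [Matrix.mul_assoc]
  _ = A := by
    rw [hU, Matrix.mul_one, diagonal_mul_diagonal]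
    conv_rhs => rw [hspec]
    congr 3
    funext i
    simp only [Function.comp_apply]
    rw [← RCLike.ofReal_mul, Real.mul_self_sqrt (hA.eigenvalues_nonneg i)]

open Equiv Equiv.Perm Finset Function

section CauchyBinet

variable {R : Type*} [CommRing R] {k n : ℕ}

local notation "ε " σ:arg => ((Equiv.Perm.sign σ : ℤ) : R)





/-- decidable strict monotonicity -/
def SM {k n : ℕ} (g : Fin k → Fin n) : Prop := ∀ i j : Fin k, i < j → g i < g j

instance {k n : ℕ} : DecidablePred (SM (k := k) (n := n)) := fun _ => by
  unfold SM; infer_instance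

lemma sm_iff {k n : ℕ} (g : Fin k → Fin n) : SM g ↔ StrictMono g :=
  ⟨fun h _ _ hij => h _ _ hij, fun h _ _ hij => h hij⟩

lemma cb_aux (M N : Matrix (Fin k) (Fin k) R) :
    ∑ τ : Perm (Fin k), ∑ σ : Perm (Fin k), ε σ * ∏ i, M (σ i) (τ i) * N (τ i) i
      = det M * det N :=
  calc
    ∑ τ : Perm (Fin k), ∑ σ : Perm (Fin k), ε σ * ∏ i, M (σ i) (τ i) * N (τ i) i
    _ = ∑ σ : Perm (Fin k), ∑ τ : Perm (Fin k), (∏ i, N (σ i) i) * ε τ * ∏ j, M (τ j) (σ j) := by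
      simp only [mul_comm, mul_left_comm, prod_mul_distrib, mul_assoc]
    _ = ∑ σ : Perm (Fin k), ∑ τ : Perm (Fin k), (∏ i, N (σ i) i) * (ε σ * ε τ) * ∏ i, M (τ i) i :=
      (sum_congr rfl fun σ _ =>
        Fintype.sum_equiv (Equiv.mulRight σ⁻¹) _ _ fun τ => by
          have h1 : (∏ j, M (τ j) (σ j)) = ∏ j, M ((τ * σ⁻¹) j) j := by
            rw [← (σ⁻¹ : _ ≃ _).prod_comp]
            simp only [Equiv.Perm.coe_mul, fun i => (Equiv.eq_symm_apply σ).mp (rfl : σ⁻¹ i = σ⁻¹ i), Function.comp_apply]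
          have h : ε σ * ε (τ * σ⁻¹) = ε τ :=
            calc
              ε σ * ε (τ * σ⁻¹) = ε (τ * σ⁻¹ * σ) := by
                rw [mul_comm, sign_mul (τ * σ⁻¹)]
                simp only [Int.cast_mul, Units.val_mul]
              _ = ε τ := by simp only [inv_mul_cancel_right]
          simp_rw [Equiv.coe_mulRight, h]
          simp only [h1])
    _ = det M * det N := by
      simp only [det_apply', Finset.mul_sum, mul_comm, mul_left_comm, mul_assoc]

lemma cb_vanish {X : Matrix (Fin k) (Fin n) R} {Y : Matrix (Fin n) (Fin k) R}
    {p : Fin k → Fin n} (H : ¬Function.Injective p) :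
    (∑ σ : Perm (Fin k), ε σ * ∏ x, X (σ x) (p x) * Y (p x) x) = 0 := by
  obtain ⟨i, j, hpij, hij⟩ : ∃ i j, p i = p j ∧ i ≠ j := by
    rw [Injective] at H
    push_neg at H
    exact H
  exact
    sum_involution (fun σ _ => σ * Equiv.swap i j)
      (fun σ _ => by
        have : (∏ x, X (σ x) (p x)) = ∏ x, X ((σ * Equiv.swap i j) x) (p x) :=
          Fintype.prod_equiv (swap i j) _ _ (by simp [apply_swap_eq_self hpij])
        simp [this, sign_swap hij, -sign_swap', prod_mul_distrib])
      (fun σ _ _ => (not_congr mul_swap_eq_iff).mpr hij) (fun _ _ => mem_univ _) fun σ _ =>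
      mul_swap_involutive i j σ

theorem cauchy_binet (X : Matrix (Fin k) (Fin n) R) (Y : Matrix (Fin n) (Fin k) R) :
    det (X * Y) = ∑ g ∈ Finset.univ.filter (fun g : Fin k → Fin n => SM g),
      det (X.submatrix id g) * det (Y.submatrix g id) :=
  calc
    det (X * Y) = ∑ p : Fin k → Fin n, ∑ σ : Perm (Fin k),
        ε σ * ∏ i, X (σ i) (p i) * Y (p i) i := by
      simp only [det_apply', Matrix.mul_apply, prod_univ_sum, mul_sum, Fintype.piFinset_univ]
      rw [Finset.sum_comm]
    _ = ∑ p ∈ Finset.univ.filter (fun p : Fin k → Fin n => Function.Injective p),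
        ∑ σ : Perm (Fin k), ε σ * ∏ i, X (σ i) (p i) * Y (p i) i := by
      refine (sum_subset (filter_subset _ _) fun f _ hinj ↦ cb_vanish ?_).symm
      simpa only [true_and, mem_filter, mem_univ] using hinj
    _ = ∑ gτ ∈ (Finset.univ.filter (fun g : Fin k → Fin n => SM g)) ×ˢ
          (Finset.univ : Finset (Perm (Fin k))),
        ∑ σ : Perm (Fin k), ε σ * ∏ i, X (σ i) (gτ.1 (gτ.2 i)) * Y (gτ.1 (gτ.2 i)) i := by
      refine Finset.sum_nbij' (fun p => (p ∘ Tuple.sort p, (Tuple.sort p)⁻¹))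
        (fun gτ => gτ.1 ∘ gτ.2) ?_ ?_ ?_ ?_ ?_
      · intro p hp
        have hpinj : Function.Injective p := by simpa using hp
        refine Finset.mem_product.2 ⟨?_, Finset.mem_univ _⟩
        simp only [mem_filter, mem_univ, true_and, sm_iff]
        exact (Tuple.monotone_sort p).strictMono_of_injective
          (hpinj.comp (Equiv.injective _))
      · intro gτ hgτ
        simp only [mem_filter, mem_univ, true_and]
        rcases Finset.mem_product.1 hgτ with ⟨hg, -⟩
        simp only [mem_filter, mem_univ, true_and, sm_iff] at hg
        exact hg.injective.comp (Equiv.injective _)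
      · intro p hp
        ext i
        simp
      · intro gτ hgτ
        rcases Finset.mem_product.1 hgτ with ⟨hg, -⟩
        simp only [mem_filter, mem_univ, true_and, sm_iff] at hg
        have hinj : Function.Injective (gτ.1 ∘ gτ.2) := hg.injective.comp (Equiv.injective _)
        have hmono1 : Monotone ((gτ.1 ∘ gτ.2) ∘ Tuple.sort (gτ.1 ∘ gτ.2)) :=
          Tuple.monotone_sort _
        have hmono2 : Monotone ((gτ.1 ∘ gτ.2) ∘ ⇑(gτ.2⁻¹)) := by
          have : (gτ.1 ∘ gτ.2) ∘ ⇑(gτ.2⁻¹) = gτ.1 := by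
            ext i; simp
          rw [this]; exact hg.monotone
      
        have huniq : (gτ.1 ∘ gτ.2) ∘ ⇑(Tuple.sort (gτ.1 ∘ gτ.2)) = (gτ.1 ∘ gτ.2) ∘ ⇑(gτ.2⁻¹) :=
          Tuple.unique_monotone hmono1 hmono2
        have hperm : (Tuple.sort (gτ.1 ∘ gτ.2) : Fin k → Fin k) = ((gτ.2)⁻¹ : Perm (Fin k)) := by
          funext i
          exact hinj (congrFun huniq i)
        have hperm' : Tuple.sort (gτ.1 ∘ gτ.2) = (gτ.2)⁻¹ := Equiv.ext fun i => congrFun hperm i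
        ext : 1
        · funext i
          simp [hperm']
        · simp [hperm']
      · intro p hp
        refine Finset.sum_congr rfl fun σ _ => ?_
        congr 1
        refine Finset.prod_congr rfl fun x _ => ?_
        simp
    _ = ∑ g ∈ Finset.univ.filter (fun g : Fin k → Fin n => SM g), ∑ τ : Perm (Fin k),
        ∑ σ : Perm (Fin k), ε σ * ∏ i, X (σ i) (g (τ i)) * Y (g (τ i)) i := by
      rw [Finset.sum_product]
    _ = ∑ g ∈ Finset.univ.filter (fun g : Fin k → Fin n => SM g),
        det (X.submatrix id g) * det (Y.submatrix g id) := by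
      refine Finset.sum_congr rfl fun g _ => ?_
      exact cb_aux (X.submatrix id g) (Y.submatrix g id)

end CauchyBinet

section Helpers

variable {k n : ℕ}


/-- extension of a `Fin n` tuple by zero -/
def ext0 (n : ℕ) (β : Fin n → ℝ) : ℕ → ℝ := fun i => if h : i < n then β ⟨i, h⟩ else 0

lemma le_apply_sm {k n : ℕ} (v : Fin k → Fin n) (hv : StrictMono v) :
    ∀ (m : ℕ) (h : m < k), m ≤ (v ⟨m, h⟩ : ℕ) := by
  intro m
  induction m with
  | zero => intro h; exact Nat.zero_le _
  | succ m ih =>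
    intro h
    have h' : m < k := Nat.lt_of_succ_lt h
    have : v ⟨m, h'⟩ < v ⟨m + 1, h⟩ := hv (by simp [Fin.lt_def])
    have := ih h'
    omega

lemma prod_inj_le {n k : ℕ} (β : Fin n → ℝ)
    (hβd : ∀ i j : Fin n, i ≤ j → β j ≤ β i) (hβ0 : ∀ i, 0 ≤ β i)
    (h : Fin k → Fin n) (hinj : Function.Injective h) :
    ∏ i, β (h i) ≤ ∏ i ∈ Finset.range k, ext0 n β i := by
  have hk : k ≤ n := by
    have := Fintype.card_le_of_injective h hinj
    simpa using this
  have hR : ∏ i ∈ Finset.range k, ext0 n β i = ∏ i : Fin k, β ⟨i, lt_of_lt_of_le i.2 hk⟩ := by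
    rw [← Fin.prod_univ_eq_prod_range (fun i => ext0 n β i) k]
    refine Finset.prod_congr rfl fun i _ => ?_
    simp [ext0, lt_of_lt_of_le i.2 hk]
  rw [hR]
  set σ := Tuple.sort h with hσ
  have hmono : Monotone (h ∘ σ) := Tuple.monotone_sort h
  have hsm : StrictMono (h ∘ σ) :=
    hmono.strictMono_of_injective (hinj.comp (Equiv.injective _))
  have hperm : ∏ i, β (h i) = ∏ i, β (h (σ i)) := by
    rw [← Equiv.prod_comp σ (fun i => β (h i))]
  rw [hperm]
  refine Finset.prod_le_prod (fun i _ => hβ0 _) fun i _ => ?_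
  refine hβd _ _ ?_
  rw [Fin.le_def]
  exact le_apply_sm (h ∘ σ) hsm i i.2

lemma abel_id (s c : ℕ → ℝ) (m : ℕ) :
    ∑ i ∈ range m, s i * c i
      = (∑ k ∈ range m, (s k - s (k + 1)) * (∑ i ∈ range (k + 1), c i))
        + s m * ∑ i ∈ range m, c i := by
  induction m with
  | zero => simp
  | succ m ih =>
    rw [Finset.sum_range_succ (fun i => s i * c i), ih,
      Finset.sum_range_succ (fun k => (s k - s (k + 1)) * (∑ i ∈ range (k + 1), c i)),
      Finset.sum_range_succ c]
    ring

lemma abel_le (s c : ℕ → ℝ) (hs : ∀ i j : ℕ, i ≤ j → s j ≤ s i) (hs0 : ∀ i, 0 ≤ s i)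
    (m : ℕ) (hC : ∀ k ≤ m, ∑ i ∈ range k, c i ≤ 0) :
    ∑ i ∈ range m, s i * c i ≤ 0 := by
  rw [abel_id]
  have h1 : (∑ k ∈ range m, (s k - s (k + 1)) * (∑ i ∈ range (k + 1), c i)) ≤ 0 := by
    refine Finset.sum_nonpos fun k hk => ?_
    have hk' : k + 1 ≤ m := Finset.mem_range.mp hk
    exact mul_nonpos_of_nonneg_of_nonpos (by linarith [hs k (k+1) (Nat.le_succ k)]) (hC _ hk')
  have h2 : s m * ∑ i ∈ range m, c i ≤ 0 :=
    mul_nonpos_of_nonneg_of_nonpos (hs0 m) (hC m le_rfl)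
  linarith

lemma tangent_ineq (a b : ℝ) (ha : 0 < a) (hb : 0 < b) :
    (a / (1 + a)) * (Real.log b - Real.log a) ≤ Real.log (1 + b) - Real.log (1 + a) := by
  have h1a : (0:ℝ) < 1 + a := by linarith
  have h1b : (0:ℝ) < 1 + b := by linarith
  set s := a / (1 + a) with hs
  have hs0 : 0 ≤ s := div_nonneg ha.le h1a.le
  have hs1 : s ≤ 1 := by
    rw [hs, div_le_one h1a]; linarith
  have hba : (0:ℝ) < b / a := div_pos hb ha
  have key : (b / a) ^ s ≤ (1 + b) / (1 + a) := by
    have := Real.geom_mean_le_arith_mean2_weighted hs0 (by linarith : (0:ℝ) ≤ 1 - s)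
      hba.le zero_le_one (by ring)
    rw [Real.one_rpow, mul_one] at this
    have heq : s * (b / a) + (1 - s) * 1 = (1 + b) / (1 + a) := by
      rw [hs]; field_simp; ring
    linarith [this, heq.ge, heq.le]
  have hlog := Real.log_le_log (Real.rpow_pos_of_pos hba s) key
  rw [Real.log_rpow hba, Real.log_div h1b.ne' h1a.ne', Real.log_div hb.ne' ha.ne'] at hlog
  linarith

lemma weyl_pos (x y : ℕ → ℝ) (m : ℕ)
    (hx0 : ∀ i, 0 ≤ x i)
    (hx : ∀ i < m, 0 < x i) (hy : ∀ i < m, 0 < y i)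
    (hxa : ∀ i j : ℕ, i ≤ j → x j ≤ x i)
    (hP : ∀ k ≤ m, ∏ i ∈ range k, x i ≤ ∏ i ∈ range k, y i) :
    ∏ i ∈ range m, (1 + x i) ≤ ∏ i ∈ range m, (1 + y i) := by
  have hx1 : ∀ i, (0:ℝ) < 1 + x i := fun i => by linarith [hx0 i]
  have hy1 : ∀ i < m, (0:ℝ) < 1 + y i := fun i hi => by linarith [hy i hi]
  have hL : (0:ℝ) < ∏ i ∈ range m, (1 + x i) :=
    Finset.prod_pos fun i _ => hx1 i
  have hR : (0:ℝ) < ∏ i ∈ range m, (1 + y i) :=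
    Finset.prod_pos fun i hi => hy1 i (Finset.mem_range.mp hi)
  rw [← Real.log_le_log_iff hL hR,
    Real.log_prod (fun i _ => (hx1 i).ne'),
    Real.log_prod (fun i hi => (hy1 i (Finset.mem_range.mp hi)).ne')]
  set s : ℕ → ℝ := fun i => x i / (1 + x i) with hsdef
  set c : ℕ → ℝ := fun i => Real.log (x i) - Real.log (y i) with hcdef
  have hs0 : ∀ i, 0 ≤ s i := fun i => div_nonneg (hx0 i) (hx1 i).le
  have hsanti : ∀ i j : ℕ, i ≤ j → s j ≤ s i := by
    intro i j hij
    have hxj := hx0 j; have hxi := hx0 i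
    have h := hxa i j hij
    rw [hsdef]
    simp only
    rw [div_le_div_iff₀ (by linarith) (by linarith)]
    nlinarith
  have hC : ∀ k ≤ m, ∑ i ∈ range k, c i ≤ 0 := by
    intro k hk
    have hxk : ∀ i < k, 0 < x i := fun i hi => hx i (lt_of_lt_of_le hi hk)
    have hyk : ∀ i < k, 0 < y i := fun i hi => hy i (lt_of_lt_of_le hi hk)
    have h1 : ∑ i ∈ range k, Real.log (x i) = Real.log (∏ i ∈ range k, x i) :=
      (Real.log_prod (fun i hi => (hxk i (Finset.mem_range.mp hi)).ne')).symm
    have h2 : ∑ i ∈ range k, Real.log (y i) = Real.log (∏ i ∈ range k, y i) :=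
      (Real.log_prod (fun i hi => (hyk i (Finset.mem_range.mp hi)).ne')).symm
    have h3 : Real.log (∏ i ∈ range k, x i) ≤ Real.log (∏ i ∈ range k, y i) :=
      Real.log_le_log (Finset.prod_pos fun i hi => hxk i (Finset.mem_range.mp hi)) (hP k hk)
    rw [hcdef]
    simp only [Finset.sum_sub_distrib]
    rw [h1, h2]
    linarith
  have habel := abel_le s c hsanti hs0 m hC
  have hsum : ∑ i ∈ range m, (Real.log (1 + x i) - Real.log (1 + y i))
      ≤ ∑ i ∈ range m, s i * c i := by
    refine Finset.sum_le_sum fun i hi => ?_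
    have htan := tangent_ineq (x i) (y i) (hx i (Finset.mem_range.mp hi))
      (hy i (Finset.mem_range.mp hi))
    rw [hsdef, hcdef]
    simp only
    nlinarith [htan]
  rw [Finset.sum_sub_distrib] at hsum
  linarith [hsum, habel]

lemma weyl (n : ℕ) (x y : ℕ → ℝ)
    (hx0 : ∀ i, 0 ≤ x i) (hy0 : ∀ i, 0 ≤ y i)
    (hxa : ∀ i j : ℕ, i ≤ j → x j ≤ x i)
    (hP : ∀ k ≤ n, ∏ i ∈ range k, x i ≤ ∏ i ∈ range k, y i) :
    ∏ i ∈ range n, (1 + x i) ≤ ∏ i ∈ range n, (1 + y i) := by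
  classical
  have hy' : ∀ m ≤ n, (∀ i < m, 0 < x i) → ∀ i < m, 0 < y i := by
    intro m hm hxpos i hi
    by_contra hyi
    push_neg at hyi
    have hyi0 : y i = 0 := le_antisymm hyi (hy0 i)
    have h1 : ∏ j ∈ range (i+1), y j = 0 :=
      Finset.prod_eq_zero (Finset.mem_range.mpr (Nat.lt_succ_self i)) hyi0
    have h2 : (0:ℝ) < ∏ j ∈ range (i+1), x j :=
      Finset.prod_pos fun j hj =>
        hxpos j (lt_of_lt_of_le (Finset.mem_range.mp hj) (Nat.succ_le_of_lt hi))
    have := hP (i+1) (le_trans (Nat.succ_le_of_lt hi) hm)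
    rw [h1] at this
    linarith
  by_cases hall : ∀ i < n, 0 < x i
  · exact weyl_pos x y n hx0 hall (hy' n le_rfl hall) hxa hP
  · push_neg at hall
    obtain ⟨i₀, hi₀n, hi₀⟩ := hall
    have hex : ∃ i, x i ≤ 0 := ⟨i₀, hi₀⟩
    set m := Nat.find hex with hm
    have hxm : x m = 0 := le_antisymm (Nat.find_spec hex) (hx0 m)
    have hmlt : m ≤ i₀ := Nat.find_min' hex hi₀
    have hmn : m ≤ n := le_trans hmlt (le_of_lt hi₀n)
    have hxpos : ∀ i < m, 0 < x i := by
      intro i hi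
      have := Nat.find_min hex hi
      push_neg at this
      exact this
    have hxzero : ∀ i, m ≤ i → x i = 0 := fun i hi =>
      le_antisymm (hxm ▸ hxa m i hi) (hx0 i)
    have hsplitx : ∏ i ∈ range n, (1 + x i)
        = (∏ i ∈ range m, (1 + x i)) * ∏ i ∈ Ico m n, (1 + x i) :=
      (Finset.prod_range_mul_prod_Ico _ hmn).symm
    have hIcox : ∏ i ∈ Ico m n, (1 + x i) = 1 := by
      refine Finset.prod_eq_one fun i hi => ?_
      rw [hxzero i (Finset.mem_Ico.mp hi).1, add_zero]
    have hsplity : ∏ i ∈ range n, (1 + y i)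
        = (∏ i ∈ range m, (1 + y i)) * ∏ i ∈ Ico m n, (1 + y i) :=
      (Finset.prod_range_mul_prod_Ico _ hmn).symm
    have hIcoy : (1:ℝ) ≤ ∏ i ∈ Ico m n, (1 + y i) := by
      calc (1:ℝ) = ∏ _i ∈ Ico m n, (1:ℝ) := by simp
      _ ≤ ∏ i ∈ Ico m n, (1 + y i) :=
        Finset.prod_le_prod (fun i _ => zero_le_one) (fun i _ => by linarith [hy0 i])
    have hmain := weyl_pos x y m hx0 hxpos
      (hy' m hmn hxpos) hxa (fun k hk => hP k (le_trans hk hmn))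
    have hpos : (0:ℝ) ≤ ∏ i ∈ range m, (1 + y i) :=
      Finset.prod_nonneg fun i _ => by linarith [hy0 i]
    rw [hsplitx, hIcox, hsplity, mul_one]
    calc ∏ i ∈ range m, (1 + x i) ≤ ∏ i ∈ range m, (1 + y i) := hmain
    _ = (∏ i ∈ range m, (1 + y i)) * 1 := (mul_one _).symm
    _ ≤ (∏ i ∈ range m, (1 + y i)) * ∏ i ∈ Ico m n, (1 + y i) := by
        exact mul_le_mul_of_nonneg_left hIcoy hpos

lemma l_sub (B : Matrix (Fin n) (Fin n) ℂ) (hB : B.PosSemidef)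
    (W : Matrix (Fin n) (Fin k) ℂ) (c : ℝ) (hc0 : 0 ≤ c)
    (hc : ∀ g : Fin k → Fin n, Function.Injective g →
      ∏ i, hB.isHermitian.eigenvalues (g i) ≤ c) :
    ∃ r s : ℝ, det (Wᴴ * B * W) = (r : ℂ) ∧ det (Wᴴ * W) = (s : ℂ) ∧
      0 ≤ r ∧ 0 ≤ s ∧ r ≤ c * s := by
  set U : Matrix (Fin n) (Fin n) ℂ := (hB.isHermitian.eigenvectorUnitary : Matrix (Fin n) (Fin n) ℂ) with hUdef
  set dd : Fin n → ℝ := hB.isHermitian.eigenvalues with hdd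
  have hU1 : Uᴴ * U = 1 := by
    rw [← Matrix.star_eq_conjTranspose]
    exact Matrix.mem_unitaryGroup_iff'.mp hB.isHermitian.eigenvectorUnitary.2
  have hU2 : U * Uᴴ = 1 := by
    rw [← Matrix.star_eq_conjTranspose]
    exact Matrix.mem_unitaryGroup_iff.mp hB.isHermitian.eigenvectorUnitary.2
  have hspec : B = U * diagonal (fun l => (dd l : ℂ)) * Uᴴ := by
    rw [← Matrix.star_eq_conjTranspose]
    exact hB.isHermitian.spectral_theorem
  set X : Matrix (Fin k) (Fin n) ℂ := Wᴴ * U with hX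
  have hXH : Xᴴ = Uᴴ * W := by
    rw [hX, conjTranspose_mul, conjTranspose_conjTranspose]
  have key1 : Wᴴ * B * W = X * (diagonal (fun l => (dd l : ℂ)) * Xᴴ) := by
    rw [hspec, hXH, hX]
    simp only [Matrix.mul_assoc]
  have key2 : Wᴴ * W = X * Xᴴ := by
    rw [hXH, hX]
    calc Wᴴ * W = Wᴴ * (1 : Matrix (Fin n) (Fin n) ℂ) * W := by rw [Matrix.mul_one]
    _ = Wᴴ * U * (Uᴴ * W) := by rw [← hU2]; simp only [Matrix.mul_assoc]
  have hdiagsub : ∀ g : Fin k → Fin n,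
      (diagonal (fun l => (dd l : ℂ)) * Xᴴ).submatrix g id
        = diagonal (fun i => (dd (g i) : ℂ)) * (X.submatrix id g)ᴴ := by
    intro g
    ext i j
    simp [Matrix.diagonal_mul, Matrix.submatrix_apply, Matrix.conjTranspose_apply]
  have hXHsub : ∀ g : Fin k → Fin n, (Xᴴ).submatrix g id = (X.submatrix id g)ᴴ := by
    intro g; ext i j
    simp [Matrix.submatrix_apply, Matrix.conjTranspose_apply]
  refine ⟨∑ g ∈ Finset.univ.filter (fun g : Fin k → Fin n => SM g),
      (∏ i, dd (g i)) * Complex.normSq (det (X.submatrix id g)),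
    ∑ g ∈ Finset.univ.filter (fun g : Fin k → Fin n => SM g),
      Complex.normSq (det (X.submatrix id g)), ?_, ?_, ?_, ?_, ?_⟩
  · rw [key1, cauchy_binet]
    push_cast
    refine Finset.sum_congr rfl fun g _ => ?_
    rw [hdiagsub g, det_mul, det_conjTranspose, det_diagonal, RCLike.star_def]
    push_cast
    rw [← Complex.mul_conj]
    ring
  · rw [key2, cauchy_binet]
    push_cast
    refine Finset.sum_congr rfl fun g _ => ?_
    rw [hXHsub g, det_conjTranspose, RCLike.star_def, ← Complex.mul_conj]
  · refine Finset.sum_nonneg fun g _ => mul_nonneg (Finset.prod_nonneg fun i _ => hB.eigenvalues_nonneg _) (Complex.normSq_nonneg _)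
  · exact Finset.sum_nonneg fun g _ => Complex.normSq_nonneg _
  · rw [Finset.mul_sum]
    refine Finset.sum_le_sum fun g hg => ?_
    have hgsm : StrictMono g := (sm_iff g).mp (by simpa using hg)
    exact mul_le_mul_of_nonneg_right (hc g hgsm.injective) (Complex.normSq_nonneg _)

lemma l_pick (M : Matrix (Fin n) (Fin n) ℂ) (hM : M.IsHermitian)
    (g : Fin k → Fin n) (hg : Function.Injective g) :
    ((hM.eigenvectorUnitary : Matrix (Fin n) (Fin n) ℂ).submatrix id g)ᴴ * M *
        ((hM.eigenvectorUnitary : Matrix (Fin n) (Fin n) ℂ).submatrix id g)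
      = diagonal (fun i => (hM.eigenvalues (g i) : ℂ)) ∧
    ((hM.eigenvectorUnitary : Matrix (Fin n) (Fin n) ℂ).submatrix id g)ᴴ *
        ((hM.eigenvectorUnitary : Matrix (Fin n) (Fin n) ℂ).submatrix id g) = 1 := by
  set U : Matrix (Fin n) (Fin n) ℂ := (hM.eigenvectorUnitary : Matrix (Fin n) (Fin n) ℂ)
  have hU1 : Uᴴ * U = 1 := by
    rw [← Matrix.star_eq_conjTranspose]
    exact Matrix.mem_unitaryGroup_iff'.mp hM.eigenvectorUnitary.2
  have hspec : M = U * diagonal (fun l => (hM.eigenvalues l : ℂ)) * Uᴴ := by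
    rw [← Matrix.star_eq_conjTranspose]
    exact hM.spectral_theorem
  have hMU : M * U = U * diagonal (fun l => (hM.eigenvalues l : ℂ)) := by
    conv_lhs => rw [hspec]
    calc U * diagonal (fun l => (hM.eigenvalues l : ℂ)) * Uᴴ * U
        = U * diagonal (fun l => (hM.eigenvalues l : ℂ)) * (Uᴴ * U) := by
          simp only [Matrix.mul_assoc]
    _ = _ := by rw [hU1, Matrix.mul_one]
  constructor
  · ext i j
    simp only [Matrix.mul_apply, Matrix.conjTranspose_apply, Matrix.submatrix_apply, id_eq]
    have : ∀ l : Fin n, ∑ x : Fin n, (starRingEnd ℂ) (U x (g i)) * M x l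
        = (Uᴴ * M) (g i) l := by
      intro l; simp [Matrix.mul_apply, Matrix.conjTranspose_apply]
    calc ∑ l : Fin n, (∑ x : Fin n, (starRingEnd ℂ) (U x (g i)) * M x l) * U l (g j)
        = ∑ l : Fin n, (Uᴴ * M) (g i) l * U l (g j) := by
          refine Finset.sum_congr rfl fun l _ => ?_; rw [this l]
    _ = (Uᴴ * M * U) (g i) (g j) := by rw [Matrix.mul_apply]
    _ = (Uᴴ * (M * U)) (g i) (g j) := by rw [Matrix.mul_assoc]
    _ = (Uᴴ * (U * diagonal (fun l => (hM.eigenvalues l : ℂ)))) (g i) (g j) := by rw [hMU]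
    _ = ((Uᴴ * U) * diagonal (fun l => (hM.eigenvalues l : ℂ))) (g i) (g j) := by
          rw [Matrix.mul_assoc]
    _ = diagonal (fun l => (hM.eigenvalues l : ℂ)) (g i) (g j) := by rw [hU1, Matrix.one_mul]
    _ = diagonal (fun i => (hM.eigenvalues (g i) : ℂ)) i j := by
          rcases eq_or_ne i j with rfl | hij
          · simp [Matrix.diagonal_apply]
          · rw [Matrix.diagonal_apply_ne _ (fun h => hij (hg h)),
              Matrix.diagonal_apply_ne _ hij]
  · ext i j
    have : (Uᴴ * U) (g i) (g j) = (1 : Matrix (Fin n) (Fin n) ℂ) (g i) (g j) := by rw [hU1]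
    simp only [Matrix.mul_apply, Matrix.conjTranspose_apply, Matrix.submatrix_apply, id_eq]
    simp only [Matrix.mul_apply, Matrix.conjTranspose_apply] at this
    rw [this]
    rcases eq_or_ne i j with rfl | hij
    · simp
    · rw [Matrix.one_apply_ne (fun h => hij (hg h)), Matrix.one_apply_ne hij]

lemma l_detI (M : Matrix (Fin n) (Fin n) ℂ) (hM : M.IsHermitian) :
    det (1 + M) = ((∏ i, (1 + hM.eigenvalues i) : ℝ) : ℂ) := by
  set U : Matrix (Fin n) (Fin n) ℂ := (hM.eigenvectorUnitary : Matrix (Fin n) (Fin n) ℂ)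
  have hU1 : Uᴴ * U = 1 := by
    rw [← Matrix.star_eq_conjTranspose]
    exact Matrix.mem_unitaryGroup_iff'.mp hM.eigenvectorUnitary.2
  have hU2 : U * Uᴴ = 1 := by
    rw [← Matrix.star_eq_conjTranspose]
    exact Matrix.mem_unitaryGroup_iff.mp hM.eigenvectorUnitary.2
  have hspec : M = U * diagonal (fun l => (hM.eigenvalues l : ℂ)) * Uᴴ := by
    rw [← Matrix.star_eq_conjTranspose]
    exact hM.spectral_theorem
  have key : 1 + M = U * diagonal (fun l => (1 + hM.eigenvalues l : ℝ) * (1:ℂ)) * Uᴴ := by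
    have : diagonal (fun l => ((1 + hM.eigenvalues l : ℝ) : ℂ) * (1:ℂ))
        = 1 + diagonal (fun l => (hM.eigenvalues l : ℂ)) := by
      rw [← Matrix.diagonal_one, Matrix.diagonal_add]
      congr 1
      funext l
      push_cast
      ring
    rw [this, Matrix.mul_add, Matrix.add_mul, Matrix.mul_one, hU2, ← hspec]
  rw [key, det_mul, det_mul]
  have h1 : det Uᴴ * det U = 1 := by rw [← det_mul, hU1, det_one]
  have h2 : det U * det (diagonal fun l => ((1 + hM.eigenvalues l : ℝ) : ℂ) * (1:ℂ)) * det Uᴴ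
      = det (diagonal fun l => ((1 + hM.eigenvalues l : ℝ) : ℂ) * (1:ℂ)) * (det Uᴴ * det U) := by
    ring
  rw [h2, h1, mul_one, det_diagonal]
  push_cast
  simp

end Helpers

/-- Determinant inequality used in the proof of Lemma 1 (via Hadamard's inequality and
Marshall–Olkin eigenvalue-product inequalities): for Hermitian positive semidefinite `A`,
`B` with eigenvalues `α_1 ≥ … ≥ α_n`, `β_1 ≥ … ≥ β_n`, and `√A` the PSD square root of `A`,
`det(I + √A B √A) ≤ ∏_i (1 + α_i β_i)`. -/
theorem stmt_4 {n : ℕ} (A B : Matrix (Fin n) (Fin n) ℂ)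
    (hA : A.PosSemidef) (hB : B.PosSemidef) (α β : Fin n → ℝ)
    (hαd : ∀ i j : Fin n, i ≤ j → α j ≤ α i)
    (hβd : ∀ i j : Fin n, i ≤ j → β j ≤ β i)
    (hαe : ∃ e : Equiv.Perm (Fin n), ∀ i, α i = hA.isHermitian.eigenvalues (e i))
    (hβe : ∃ e : Equiv.Perm (Fin n), ∀ i, β i = hB.isHermitian.eigenvalues (e i)) :
    ∃ d : ℝ, (1 + hA.sqrt * B * hA.sqrt).det = (d : ℂ) ∧ d ≤ ∏ i, (1 + α i * β i) := by
  classical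
  have hsqH : (hA.sqrt)ᴴ = hA.sqrt := hA.posSemidef_sqrt.isHermitian
  have hM : (hA.sqrt * B * hA.sqrt).PosSemidef := by
    have := hB.mul_mul_conjTranspose_same hA.sqrt
    rwa [hsqH] at this
  set M : Matrix (Fin n) (Fin n) ℂ := hA.sqrt * B * hA.sqrt with hMdef
  have hMh : M.IsHermitian := hM.isHermitian
  set eig : Fin n → ℝ := hMh.eigenvalues with heig
  have heig0 : ∀ i, 0 ≤ eig i := fun i => hM.eigenvalues_nonneg i
  -- nonnegativity of α, β
  obtain ⟨eα, hαeig⟩ := hαe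
  obtain ⟨eβ, hβeig⟩ := hβe
  have hα0 : ∀ i, 0 ≤ α i := fun i => (hαeig i) ▸ hA.eigenvalues_nonneg (eα i)
  have hβ0 : ∀ i, 0 ≤ β i := fun i => (hβeig i) ▸ hB.eigenvalues_nonneg (eβ i)
  -- sorted eigenvalues of M
  set σ : Equiv.Perm (Fin n) := Tuple.sort (fun i => -eig i) with hσdef
  have hσmono : Monotone ((fun i => -eig i) ∘ σ) := Tuple.monotone_sort _
  have hσanti : ∀ i j : Fin n, i ≤ j → eig (σ j) ≤ eig (σ i) := by
    intro i j hij
    have := hσmono hij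
    simp only [Function.comp_apply] at this
    linarith
  set x : ℕ → ℝ := ext0 n (fun i => eig (σ i)) with hxdef
  set y : ℕ → ℝ := ext0 n (fun i => α i * β i) with hydef
  have hx0 : ∀ i, 0 ≤ x i := by
    intro i; rw [hxdef]; unfold ext0; split
    · exact heig0 _
    · exact le_rfl
  have hy0 : ∀ i, 0 ≤ y i := by
    intro i; rw [hydef]; unfold ext0; split
    · exact mul_nonneg (hα0 _) (hβ0 _)
    · exact le_rfl
  have hxa : ∀ i j : ℕ, i ≤ j → x j ≤ x i := by
    intro i j hij
    rw [hxdef]; unfold ext0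
    by_cases hj : j < n
    · have hi : i < n := lt_of_le_of_lt hij hj
      rw [dif_pos hj, dif_pos hi]
      exact hσanti ⟨i, hi⟩ ⟨j, hj⟩ hij
    · rw [dif_neg hj]
      exact hx0 i
  have hya : ∀ i j : ℕ, i ≤ j → y j ≤ y i := by
    intro i j hij
    rw [hydef]; unfold ext0
    by_cases hj : j < n
    · have hi : i < n := lt_of_le_of_lt hij hj
      rw [dif_pos hj, dif_pos hi]
      exact mul_le_mul (hαd ⟨i, hi⟩ ⟨j, hj⟩ hij) (hβd ⟨i, hi⟩ ⟨j, hj⟩ hij)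
        (hβ0 _) (hα0 _)
    · rw [dif_neg hj]
      exact hy0 i
  -- Horn inequalities
  have horn : ∀ k, k ≤ n → ∏ i ∈ range k, x i ≤ ∏ i ∈ range k, y i := by
    intro k hk
    set g : Fin k → Fin n := fun i => σ (Fin.castLE hk i) with hgdef
    have hg : Function.Injective g :=
      σ.injective.comp (Fin.castLE_injective hk)
    set V : Matrix (Fin n) (Fin k) ℂ :=
      (hMh.eigenvectorUnitary : Matrix (Fin n) (Fin n) ℂ).submatrix id g with hVdef
    obtain ⟨hVMV, hVV⟩ := l_pick M hMh g hg
    have hWH : (hA.sqrt * V)ᴴ = Vᴴ * hA.sqrt := by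
      rw [conjTranspose_mul, hsqH]
    have e1 : (hA.sqrt * V)ᴴ * B * (hA.sqrt * V) = Vᴴ * M * V := by
      rw [hWH, hMdef]
      simp only [Matrix.mul_assoc]
    have e2 : (hA.sqrt * V)ᴴ * (hA.sqrt * V) = Vᴴ * A * V := by
      rw [hWH]
      calc Vᴴ * hA.sqrt * (hA.sqrt * V) = Vᴴ * (hA.sqrt * hA.sqrt) * V := by
            simp only [Matrix.mul_assoc]
      _ = Vᴴ * A * V := by rw [hA.sqrt_mul_self]
    set cα : ℝ := ∏ i ∈ range k, ext0 n α i with hcαdef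
    set cβ : ℝ := ∏ i ∈ range k, ext0 n β i with hcβdef
    have hext0α : ∀ i, 0 ≤ ext0 n α i := by
      intro i; unfold ext0; split
      · exact hα0 _
      · exact le_rfl
    have hext0β : ∀ i, 0 ≤ ext0 n β i := by
      intro i; unfold ext0; split
      · exact hβ0 _
      · exact le_rfl
    have hcα0 : 0 ≤ cα := Finset.prod_nonneg fun i _ => hext0α i
    have hcβ0 : 0 ≤ cβ := Finset.prod_nonneg fun i _ => hext0β i
    have hcβ : ∀ h : Fin k → Fin n, Function.Injective h →
        ∏ i, hB.isHermitian.eigenvalues (h i) ≤ cβ := by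
      intro h hinj
      have hval : ∀ l, hB.isHermitian.eigenvalues l = β (eβ.symm l) := by
        intro l
        rw [hβeig (eβ.symm l), Equiv.apply_symm_apply]
      calc ∏ i, hB.isHermitian.eigenvalues (h i) = ∏ i, β (eβ.symm (h i)) := by
            exact Finset.prod_congr rfl fun i _ => hval (h i)
      _ ≤ cβ := prod_inj_le β hβd hβ0 (fun i => eβ.symm (h i))
            (eβ.symm.injective.comp hinj)
    have hcα : ∀ h : Fin k → Fin n, Function.Injective h →
        ∏ i, hA.isHermitian.eigenvalues (h i) ≤ cα := by
      intro h hinj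
      have hval : ∀ l, hA.isHermitian.eigenvalues l = α (eα.symm l) := by
        intro l
        rw [hαeig (eα.symm l), Equiv.apply_symm_apply]
      calc ∏ i, hA.isHermitian.eigenvalues (h i) = ∏ i, α (eα.symm (h i)) := by
            exact Finset.prod_congr rfl fun i _ => hval (h i)
      _ ≤ cα := prod_inj_le α hαd hα0 (fun i => eα.symm (h i))
            (eα.symm.injective.comp hinj)
    obtain ⟨r, s, hr, hs, hr0, hs0, hrs⟩ := l_sub B hB (hA.sqrt * V) cβ hcβ0 hcβ
    obtain ⟨r', s', hr', hs', hr'0, hs'0, hr's'⟩ := l_sub A hA V cα hcα0 hcα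
    -- identify r with ∏ x
    have hprodx : det (Vᴴ * M * V) = ((∏ i ∈ range k, x i : ℝ) : ℂ) := by
      rw [hVMV, det_diagonal]
      rw [← Fin.prod_univ_eq_prod_range x k]
      push_cast
      refine Finset.prod_congr rfl fun i _ => ?_
      rw [hxdef]
      unfold ext0
      rw [dif_pos (lt_of_lt_of_le i.2 hk)]
      rfl
    have hrx : (∏ i ∈ range k, x i : ℝ) = r := by
      have : ((∏ i ∈ range k, x i : ℝ) : ℂ) = (r : ℂ) := by
        rw [← hprodx, ← e1, hr]
      exact_mod_cast this
    have hsr' : s = r' := by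
      have : (s : ℂ) = (r' : ℂ) := by rw [← hs, ← hr', e2]
      exact_mod_cast this
    have hs'1 : s' = 1 := by
      have : (s' : ℂ) = (1 : ℂ) := by
        rw [← hs', hVV, det_one]
      exact_mod_cast this
    have hy_eq : ∏ i ∈ range k, y i = cα * cβ := by
      rw [hydef, hcαdef, hcβdef, ← Finset.prod_mul_distrib]
      refine Finset.prod_congr rfl fun i hi => ?_
      have hi' : i < n := lt_of_lt_of_le (Finset.mem_range.mp hi) hk
      unfold ext0
      rw [dif_pos hi', dif_pos hi', dif_pos hi']
    rw [hy_eq, hrx]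
    rw [hs'1, mul_one] at hr's'
    calc r ≤ cβ * s := hrs
    _ = cβ * r' := by rw [hsr']
    _ ≤ cβ * cα := mul_le_mul_of_nonneg_left hr's' hcβ0
    _ = cα * cβ := mul_comm _ _
  -- conclude
  refine ⟨∏ i ∈ range n, (1 + x i), ?_, ?_⟩
  · rw [show (1 + hA.sqrt * B * hA.sqrt) = 1 + M from rfl, l_detI M hMh]
    congr 1
    rw [← Equiv.prod_comp σ (fun i => 1 + eig i), ← Fin.prod_univ_eq_prod_range (fun i => 1 + x i) n]
    refine Finset.prod_congr rfl fun i _ => ?_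
    rw [hxdef]
    unfold ext0
    rw [dif_pos i.2]
  · calc ∏ i ∈ range n, (1 + x i) ≤ ∏ i ∈ range n, (1 + y i) :=
        weyl n x y hx0 hy0 hxa horn
    _ = ∏ i, (1 + α i * β i) := by
        rw [← Fin.prod_univ_eq_prod_range (fun i => 1 + y i) n]
        refine Finset.prod_congr rfl fun i _ => ?_
        rw [hydef]
        unfold ext0
        rw [dif_pos i.2]
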